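/- In the Berry-paradox proof of Tarski's theorem: if Υ(x) defines truth in ℕ (ℕ ⊨ Υ(⌜β⌝) ↔ β for all sentences β) and B_Υ(x) is the formula expressing 'x is the least number not definable by any formula of length < 6ℓ_Υ', where ℓ_Υ is the length of Berry_Υ^{<x'}(x) and len(B_Υ) < 6ℓ_Υ, then ℕ ⊨ ¬B_Υ(n̄) for every n, yet there exists b ∈ ℕ with ℕ ⊨ B_Υ(b̄); contradiction, so no truth-defining formula Υ exists. -/
import Mathlib


open FirstOrder Language

/-- Function symbols of the language of arithmetic: 0, 1, +, ×. -/
inductive ArithFunc : ℕ → Type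
  | zero : ArithFunc 0
  | one : ArithFunc 0
  | add : ArithFunc 2
  | mul : ArithFunc 2

/-- Relation symbols of the language of arithmetic: <. -/
inductive ArithRel : ℕ → Type
  | lt : ArithRel 2

/-- The first-order language of arithmetic. -/
def LA : FirstOrder.Language := ⟨ArithFunc, ArithRel⟩

/-- The standard model ℕ of arithmetic. -/
instance : LA.Structure ℕ where
  funMap := fun {_} f => match f with
    | .zero => fun _ => 0
    | .one => fun _ => 1
    | .add => fun v => v 0 + v 1
    | .mul => fun v => v 0 * v 1
  RelMap := fun {_} r => match r with
    | .lt => fun v => v 0 < v 1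

instance : Encodable (Σ n, LA.Functions n) :=
  Encodable.ofEquiv (Fin 4)
    { toFun := fun f => match f with
        | ⟨0, .zero⟩ => 0
        | ⟨0, .one⟩ => 1
        | ⟨2, .add⟩ => 2
        | ⟨2, .mul⟩ => 3
      invFun := fun i => match i with
        | 0 => ⟨0, .zero⟩
        | 1 => ⟨0, .one⟩
        | 2 => ⟨2, .add⟩
        | 3 => ⟨2, .mul⟩
      left_inv := by rintro ⟨n, f⟩ <;> cases f <;> rfl
      right_inv := by intro i; fin_cases i <;> rfl }

instance : Encodable (Σ n, LA.Relations n) :=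
  Encodable.ofEquiv (Fin 1)
    { toFun := fun f => match f with
        | ⟨2, .lt⟩ => 0
      invFun := fun _ => ⟨2, .lt⟩
      left_inv := by rintro ⟨n, r⟩; cases r; rfl
      right_inv := by intro i; fin_cases i; rfl }

/-- A canonical (computable, injective) Gödel numbering `⌜·⌝` of sentences,
via Mathlib's list encoding of first-order formulas. -/
def godelCode (φ : LA.Sentence) : ℕ :=
  Encodable.encode φ.listEncode

/-- The numeral `n̄`: `0̄ = 0`, `1̄ = 1`, `(m+1)̄ = 1 + m̄`. -/
def numeral (α : Type) : ℕ → LA.Term α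
  | 0 => Constants.term ArithFunc.zero
  | 1 => Constants.term ArithFunc.one
  | n + 2 => Functions.apply₂ (L := LA) ArithFunc.add
      (Constants.term ArithFunc.one) (numeral α (n + 1))

/-- `ℕ ⊨ Ψ(⌜θ⌝)`: the formula `Ψ(x)` holds in the standard model ℕ at the
Gödel code of the sentence `θ`. -/
def RealizeAtCode (Ψ : LA.Formula (Fin 1)) (θ : LA.Sentence) : Prop :=
  Ψ.Realize (M := ℕ) (fun _ => (godelCode θ : ℕ))

/-- A theory is consistent iff it does not prove (have as a consequence) falsum. -/
def Consistent (T : LA.Theory) : Prop :=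
  ¬ (T ⊨ᵇ (⊥ : LA.Sentence))

/-- The sentence `Ψ(⌜θ⌝) ↔ θ`. -/
def diagBicond (Ψ : LA.Formula (Fin 1)) (θ : LA.Sentence) : LA.Sentence :=
  (Ψ.subst (fun _ => numeral Empty (godelCode θ))) ⇔ θ

/-- The term `t + 1` (successor). -/
def succT {α : Type} {n : ℕ} (t : LA.Term (α ⊕ Fin n)) : LA.Term (α ⊕ Fin n) :=
  Functions.apply₂ (L := LA) ArithFunc.add t (Constants.term ArithFunc.one)

/-- The term `0`. -/
def zeroT {α : Type} {n : ℕ} : LA.Term (α ⊕ Fin n) := Constants.term (L := LA) ArithFunc.zero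

/-- The term `t + s`. -/
def addT {α : Type} {n : ℕ} (t s : LA.Term (α ⊕ Fin n)) : LA.Term (α ⊕ Fin n) :=
  Functions.apply₂ (L := LA) ArithFunc.add t s

/-- The term `t * s`. -/
def mulT {α : Type} {n : ℕ} (t s : LA.Term (α ⊕ Fin n)) : LA.Term (α ⊕ Fin n) :=
  Functions.apply₂ (L := LA) ArithFunc.mul t s

/-- The atomic formula `t < s`. -/
def ltF {α : Type} {n : ℕ} (t s : LA.Term (α ⊕ Fin n)) : LA.BoundedFormula α n :=
  Relations.boundedFormula₂ (L := LA) ArithRel.lt t s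

/-- Robinson's arithmetic Q. -/
def Q : LA.Theory :=
  { ∀' ∼(succT &0 =' zeroT),
    ∀' ∀' (succT &0 =' succT &1 ⟹ &0 =' &1),
    ∀' (∼(&0 =' zeroT) ⟹ ∃' (&0 =' succT &1)),
    ∀' (addT &0 zeroT =' &0),
    ∀' ∀' (addT &0 (succT &1) =' succT (addT &0 &1)),
    ∀' (mulT &0 zeroT =' zeroT),
    ∀' ∀' (mulT &0 (succT &1) =' addT (mulT &0 &1) &0),
    ∀' ∀' (ltF &0 &1 ⇔ ∃' (addT &0 (succT &2) =' &1)) }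

/-- A theory is recursively enumerable iff its set of Gödel codes is the domain
of a partial recursive function. -/
def RETheory (T : LA.Theory) : Prop :=
  ∃ f : ℕ →. Unit, Partrec f ∧ ∀ φ : LA.Sentence, φ ∈ T ↔ (f (godelCode φ)).Dom

/-- The formula `φ(x)` defines the number `m` in ℕ: `ℕ ⊨ ∀ζ (φ(ζ) ↔ ζ = m̄)`. -/
def DefinesNum (φ : LA.Formula (Fin 1)) (m : ℕ) : Prop :=
  ∀ ζ : ℕ, φ.Realize (M := ℕ) (fun _ => ζ) ↔ ζ = m

/-- **The Berry-paradox proof of Tarski's theorem.** Suppose `len` is a length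
function on formulas with only finitely many formulas below each length, and
for each `Υ` the formula `B_Υ` has length `< 6ℓ_Υ` and — provided `Υ` defines
truth in ℕ — expresses "`x` is the least number not definable by any formula of
length `< 6ℓ_Υ`". Then (since then `ℕ ⊨ ¬B_Υ(n̄)` for every `n`, yet
`ℕ ⊨ B_Υ(b̄)` for some `b`, a contradiction) no truth-defining formula exists. -/
theorem stmt19 (len : LA.Formula (Fin 1) → ℕ)
    (hfin : ∀ n : ℕ, {φ : LA.Formula (Fin 1) | len φ < n}.Finite)
    (B : LA.Formula (Fin 1) → LA.Formula (Fin 1)) (ℓ : LA.Formula (Fin 1) → ℕ)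
    (hlenB : ∀ Υ : LA.Formula (Fin 1), len (B Υ) < 6 * ℓ Υ)
    (hBmeaning : ∀ Υ : LA.Formula (Fin 1),
      (∀ β : LA.Sentence, (RealizeAtCode Υ β ↔ ℕ ⊨ β)) →
      ∀ m : ℕ, ((B Υ).Realize (M := ℕ) (fun _ => m) ↔
        ((¬ ∃ φ : LA.Formula (Fin 1), len φ < 6 * ℓ Υ ∧ DefinesNum φ m) ∧
         (∀ k < m, ∃ φ : LA.Formula (Fin 1), len φ < 6 * ℓ Υ ∧ DefinesNum φ k)))) :
    ¬ ∃ Υ : LA.Formula (Fin 1), ∀ β : LA.Sentence, (RealizeAtCode Υ β ↔ ℕ ⊨ β) := by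
  classical
  rintro ⟨Υ, hΥ⟩
  have hdef := hBmeaning Υ hΥ
  set N := 6 * ℓ Υ with hN
  set S : Set ℕ := {m | ∃ φ : LA.Formula (Fin 1), len φ < N ∧ DefinesNum φ m} with hS
  have hSfin : S.Finite := by
    have hsub : S ⊆ ⋃ φ ∈ {φ : LA.Formula (Fin 1) | len φ < N}, {m | DefinesNum φ m} := by
      rintro m ⟨φ, hφ, hd⟩
      exact Set.mem_biUnion hφ hd
    refine Set.Finite.subset (Set.Finite.biUnion (hfin N) ?_) hsub
    intro φ _
    refine Set.Subsingleton.finite ?_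
    intro a ha b hb
    have h1 : φ.Realize (M := ℕ) (fun _ => a) := (ha a).mpr rfl
    have h2 : a = b := (hb a).mp h1
    exact h2
  have hcompl : ∃ m, m ∉ S := by
    have := hSfin.infinite_compl
    obtain ⟨m, hm⟩ := this.nonempty
    exact ⟨m, hm⟩
  let b := Nat.find hcompl
  have hb : b ∉ S := Nat.find_spec hcompl
  have hblt : ∀ k < b, k ∈ S := fun k hk => by
    by_contra hkS
    exact absurd hk (not_lt.mpr (Nat.find_le hkS))
  have hBb : (B Υ).Realize (M := ℕ) (fun _ => b) := by
    rw [hdef b]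
    exact ⟨hb, hblt⟩
  have hdefsB : DefinesNum (B Υ) b := by
    intro ζ
    constructor
    · intro hζ
      rw [hdef ζ] at hζ
      obtain ⟨hζnd, hζlt⟩ := hζ
      have h1 : b ≤ ζ := Nat.find_le hζnd
      have h2 : ζ ≤ b := by
        by_contra h
        exact hb (hζlt b (not_le.mp h))
      omega
    · rintro rfl
      exact hBb
  exact hb ⟨B Υ, hlenB Υ, hdefsB⟩
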